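/- arXiv:2301.03077 — 3 statements merged into one kernel-verified Lean document; each statement's English description precedes it below -/
import Mathlib

section
/- If V : ℝ^d → ℝ is C², satisfies min V > 0, and the Kurdyka-Łojasiewicz condition c·V(θ)^{-r} ≤ λ_min(∇²V(θ)) for all θ with 0 ≤ r < 1 and c > 0, then for all θ: ‖∇V(θ)‖² ≥ (2c/(1-r)) (V(θ)^{1-r} - (min V)^{1-r}). -/
open Real MeasureTheory

set_option maxHeartbeats 1000000 in
theorem stmt1 {d : ℕ} (V : EuclideanSpace ℝ (Fin d) → ℝ) (r c : ℝ)
    (hr0 : 0 ≤ r) (hr1 : r < 1) (hc : 0 < c)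
    (hC2 : ContDiff ℝ 2 V) (hconv : ConvexOn ℝ Set.univ V)
    (θstar : EuclideanSpace ℝ (Fin d)) (hmin : ∀ θ, V θstar ≤ V θ)
    (hpos : 0 < V θstar)
    (hKL : ∀ θ v, c * (V θ) ^ (-r) * ‖v‖ ^ 2 ≤ (fderiv ℝ (fderiv ℝ V) θ v) v) :
    ∀ θ, (2 * c / (1 - r)) * ((V θ) ^ (1 - r) - (V θstar) ^ (1 - r))
      ≤ ‖gradient V θ‖ ^ 2 := by
  intro θ
  by_cases hθ : θ = θstar
  · subst hθ; rw [sub_self, mul_zero]; positivity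
  set u : EuclideanSpace ℝ (Fin d) := θ - θstar with hu
  have hune : u ≠ 0 := sub_ne_zero.mpr hθ
  have hunorm : (0:ℝ) < ‖u‖ ^ 2 := by
    have : 0 < ‖u‖ := norm_pos_iff.mpr hune
    positivity
  set L : ℝ → EuclideanSpace ℝ (Fin d) := fun t => θstar + t • u with hL
  have hL0 : L 0 = θstar := by simp [hL]
  have hL1 : L 1 = θ := by simp [hL, hu]
  have hLderiv : ∀ t, HasDerivAt L u t := by
    intro t
    have : HasDerivAt (fun s : ℝ => s • u) ((1:ℝ) • u) t :=
      (hasDerivAt_id t).smul_const u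
    simpa [hL] using this.const_add θstar
  have hdV : Differentiable ℝ V := hC2.differentiable (by norm_num)
  have hdV2 : Differentiable ℝ (fderiv ℝ V) :=
    (hC2.fderiv_right (m := 1) (le_refl 2)).differentiable one_ne_zero
  set ψ : ℝ → ℝ := fun t => fderiv ℝ V (L t) u with hψdef
  have hφ : ∀ t, HasDerivAt (fun s => V (L s)) (ψ t) t := by
    intro t
    exact (hdV (L t)).hasFDerivAt.comp_hasDerivAt t (hLderiv t)
  have hψ : ∀ t, HasDerivAt ψ ((fderiv ℝ (fderiv ℝ V) (L t) u) u) t := by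
    intro t
    have h1 : HasDerivAt (fun s => fderiv ℝ V (L s)) (fderiv ℝ (fderiv ℝ V) (L t) u) t :=
      (hdV2 (L t)).hasFDerivAt.comp_hasDerivAt t (hLderiv t)
    have := h1.clm_apply (hasDerivAt_const t u)
    simpa using this
  have hVpos : ∀ θ', 0 < V θ' := fun θ' => lt_of_lt_of_le hpos (hmin θ')
  have hψ0 : ψ 0 = 0 := by
    have hlm : IsLocalMin V θstar := by
      apply IsMinOn.isLocalMin (s := Set.univ)
      · intro x _; exact hmin x
      · exact Filter.univ_mem
    simp [hψdef, hL0, hlm.fderiv_eq_zero]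
  have hH : ∀ t, c * (V (L t)) ^ (-r) * ‖u‖ ^ 2 ≤ (fderiv ℝ (fderiv ℝ V) (L t) u) u :=
    fun t => hKL (L t) u
  have hψmono : Monotone ψ := by
    apply monotone_of_deriv_nonneg (fun t => (hψ t).differentiableAt)
    intro t
    rw [(hψ t).deriv]
    refine le_trans ?_ (hH t)
    have := (hVpos (L t))
    positivity
  have hψnn : ∀ t, 0 ≤ t → 0 ≤ ψ t := fun t ht => hψ0 ▸ hψmono ht
  set K : ℝ := c * ‖u‖ ^ 2 / (1 - r) with hK
  have hr1' : (0:ℝ) < 1 - r := by linarith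
  set F : ℝ → ℝ := fun t => (ψ t) ^ 2 / 2 - K * (V (L t)) ^ (1 - r) with hF
  have hFderiv : ∀ t, HasDerivAt F
      (ψ t * (fderiv ℝ (fderiv ℝ V) (L t) u) u
        - K * ((1 - r) * (V (L t)) ^ (1 - r - 1) * ψ t)) t := by
    intro t
    have h1 : HasDerivAt (fun s => (ψ s) ^ 2 / 2) (ψ t * (fderiv ℝ (fderiv ℝ V) (L t) u) u) t := by
      have := ((hψ t).pow 2).div_const 2
      convert this using 1
      case e'_9 =>
        simp only [Nat.cast_ofNat, Nat.reduceSub, pow_one]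
        ring
      all_goals rfl
    have h2 : HasDerivAt (fun s => (V (L s)) ^ (1 - r))
        ((1 - r) * (V (L t)) ^ (1 - r - 1) * ψ t) t := by
      have hr := Real.hasDerivAt_rpow_const (x := V (L t)) (p := 1 - r)
        (Or.inl (hVpos (L t)).ne')
      exact hr.comp t (hφ t)
    exact h1.sub (h2.const_mul K)
  have hFmono : F 0 ≤ F 1 := by
    have : MonotoneOn F (Set.Ici (0:ℝ)) := by
      apply monotoneOn_of_deriv_nonneg (convex_Ici 0)
      · exact fun t _ => ((hFderiv t).differentiableAt.continuousAt).continuousWithinAt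
      · exact fun t _ => (hFderiv t).differentiableAt.differentiableWithinAt
      · intro t ht
        rw [interior_Ici] at ht
        rw [(hFderiv t).deriv]
        have hψt : 0 ≤ ψ t := hψnn t (le_of_lt ht)
        have hKeq : K * (1 - r) = c * ‖u‖ ^ 2 := by
          rw [hK, div_mul_cancel₀ _ hr1'.ne']
        have hrw : (V (L t)) ^ (1 - r - 1) = (V (L t)) ^ (-r) := by
          norm_num
        have hineq := hH t
        calc (0:ℝ) ≤ ψ t * ((fderiv ℝ (fderiv ℝ V) (L t) u) u
              - c * (V (L t)) ^ (-r) * ‖u‖ ^ 2) := by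
              exact mul_nonneg hψt (by linarith)
          _ = ψ t * (fderiv ℝ (fderiv ℝ V) (L t) u) u
              - K * ((1 - r) * (V (L t)) ^ (1 - r - 1) * ψ t) := by
              rw [hrw]
              linear_combination (V (L t) ^ (-r) * ψ t) * hKeq
    exact this (Set.mem_Ici.mpr (le_refl 0)) (by norm_num) (by norm_num)
  have hF01 : K * ((V θ) ^ (1 - r) - (V θstar) ^ (1 - r)) ≤ (ψ 1) ^ 2 / 2 := by
    have := hFmono
    simp only [hF, hψ0, hL0, hL1] at this
    nlinarith
  have hψ1 : ψ 1 = inner ℝ (gradient V θ) u := by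
    simp only [hψdef, hL1]
    rw [gradient, InnerProductSpace.toDual_symm_apply]
  have hcs : (ψ 1) ^ 2 ≤ ‖gradient V θ‖ ^ 2 * ‖u‖ ^ 2 := by
    rw [hψ1]
    have h := abs_real_inner_le_norm (gradient V θ) u
    have h2 : (inner ℝ (gradient V θ) u : ℝ) ^ 2 ≤ (‖gradient V θ‖ * ‖u‖) ^ 2 := by
      have := abs_nonneg (inner ℝ (gradient V θ) u : ℝ)
      nlinarith [sq_abs (inner ℝ (gradient V θ) u : ℝ)]
    nlinarith
  -- combine
  have hfinal : c * ‖u‖ ^ 2 / (1 - r) * ((V θ) ^ (1 - r) - (V θstar) ^ (1 - r))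
      ≤ ‖gradient V θ‖ ^ 2 * ‖u‖ ^ 2 / 2 := by
    calc c * ‖u‖ ^ 2 / (1 - r) * ((V θ) ^ (1 - r) - (V θstar) ^ (1 - r))
        ≤ (ψ 1) ^ 2 / 2 := hF01
      _ ≤ ‖gradient V θ‖ ^ 2 * ‖u‖ ^ 2 / 2 := by linarith
  rw [div_mul_eq_mul_div, div_le_iff₀ hr1'] at hfinal ⊢
  nlinarith [hfinal]
end

section
/- If V : ℝ^d → ℝ is C², convex, with min V > 0 and satisfies the KL condition c·V(θ)^{-r} ≤ λ_min(∇²V(θ)) for 0 ≤ r < 1, then for all θ: V(θ)^{1+r} - (min V)^{1+r} ≥ ((1+r)c/2)·‖θ - θ*‖², where θ* is the minimizer of V. -/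
open Real MeasureTheory

theorem stmt2 {d : ℕ} (V : EuclideanSpace ℝ (Fin d) → ℝ) (r c : ℝ)
    (hr0 : 0 ≤ r) (hr1 : r < 1) (hc : 0 < c)
    (hC2 : ContDiff ℝ 2 V) (hconv : ConvexOn ℝ Set.univ V)
    (θstar : EuclideanSpace ℝ (Fin d)) (hmin : ∀ θ, V θstar ≤ V θ)
    (hpos : 0 < V θstar)
    (hKL : ∀ θ v, c * (V θ) ^ (-r) * ‖v‖ ^ 2 ≤ (fderiv ℝ (fderiv ℝ V) θ v) v) :
    ∀ θ, ((1 + r) * c / 2) * ‖θ - θstar‖ ^ 2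
      ≤ (V θ) ^ (1 + r) - (V θstar) ^ (1 + r) := by
  intro θ
  set u := θ - θstar with hu
  have h1r : (0:ℝ) < 1 + r := by linarith
  have hV1 : Differentiable ℝ V := hC2.differentiable (by norm_num)
  have hV2 : Differentiable ℝ (fderiv ℝ V) :=
    (hC2.fderiv_right (m := 1) (by norm_num)).differentiable (by norm_num)
  set ℓ : ℝ → EuclideanSpace ℝ (Fin d) := fun t => θstar + t • u with hℓdef
  have hℓ : ∀ t, HasDerivAt ℓ u t := by
    intro t
    simpa [hℓdef] using ((hasDerivAt_id t).smul_const u).const_add θstar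
  set φ : ℝ → ℝ := fun t => V (ℓ t) with hφdef
  have hVpos : ∀ x, 0 < V x := fun x => lt_of_lt_of_le hpos (hmin x)
  have hφpos : ∀ t, 0 < φ t := fun t => hVpos _
  set φ' : ℝ → ℝ := fun t => fderiv ℝ V (ℓ t) u with hφ'def
  have hφd : ∀ t, HasDerivAt φ (φ' t) t := fun t =>
    (hV1 (ℓ t)).hasFDerivAt.comp_hasDerivAt t (hℓ t)
  set ψ : ℝ → ℝ := fun t => (fderiv ℝ (fderiv ℝ V) (ℓ t) u) u with hψdef
  have hφ'd : ∀ t, HasDerivAt φ' (ψ t) t := by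
    intro t
    have A : HasDerivAt (fun s => fderiv ℝ V (ℓ s)) (fderiv ℝ (fderiv ℝ V) (ℓ t) u) t :=
      (hV2 (ℓ t)).hasFDerivAt.comp_hasDerivAt t (hℓ t)
    have := (ContinuousLinearMap.apply ℝ ℝ u).hasFDerivAt.comp_hasDerivAt t A
    exact this
  set g : ℝ → ℝ := fun t => φ t ^ (1 + r) with hgdef
  set g' : ℝ → ℝ := fun t => φ' t * ((1 + r) * φ t ^ r) with hg'def
  have hgd : ∀ t, HasDerivAt g (g' t) t := by
    intro t
    have := (hφd t).rpow_const (p := 1 + r) (Or.inl (hφpos t).ne')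
    simpa [mul_assoc, add_sub_cancel_left] using this
  set g'' : ℝ → ℝ := fun t => ψ t * ((1 + r) * φ t ^ r)
      + φ' t * ((1 + r) * (φ' t * r * φ t ^ (r - 1))) with hg''def
  have hg'd : ∀ t, HasDerivAt g' (g'' t) t := by
    intro t
    have h2 : HasDerivAt (fun s => (1 + r) * φ s ^ r) ((1 + r) * (φ' t * r * φ t ^ (r - 1))) t :=
      ((hφd t).rpow_const (Or.inl (hφpos t).ne')).const_mul (1 + r)
    exact (hφ'd t).mul h2
  set K := (1 + r) * c * ‖u‖ ^ 2 with hKdef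
  have hK : ∀ t, K ≤ g'' t := by
    intro t
    have hkl := hKL (ℓ t) u
    have hrpow : φ t ^ (-r) * φ t ^ r = 1 := by
      rw [← Real.rpow_add (hφpos t)]; simp
    have hposr : (0:ℝ) < (1 + r) * φ t ^ r :=
      mul_pos h1r (Real.rpow_pos_of_pos (hφpos t) r)
    have h1 : K ≤ ψ t * ((1 + r) * φ t ^ r) := by
      have hmul := mul_le_mul_of_nonneg_right hkl hposr.le
      calc K = c * (φ t ^ (-r) * φ t ^ r) * ‖u‖ ^ 2 * (1 + r) := by
              rw [hrpow, hKdef]; ring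
        _ = c * φ t ^ (-r) * ‖u‖ ^ 2 * ((1 + r) * φ t ^ r) := by ring
        _ ≤ ψ t * ((1 + r) * φ t ^ r) := hmul
    have h2 : 0 ≤ φ' t * ((1 + r) * (φ' t * r * φ t ^ (r - 1))) := by
      have heq : φ' t * ((1 + r) * (φ' t * r * φ t ^ (r - 1)))
          = (1 + r) * r * φ t ^ (r - 1) * (φ' t) ^ 2 := by ring
      rw [heq]
      exact mul_nonneg (mul_nonneg (mul_nonneg h1r.le hr0)
        (Real.rpow_pos_of_pos (hφpos t) (r - 1)).le) (sq_nonneg _)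
    have : K + 0 ≤ g'' t := add_le_add h1 h2
    simpa using this
  have hφ0 : φ 0 = V θstar := by simp [hφdef, hℓdef]
  have hφ'0 : φ' 0 = 0 := by
    have hloc : IsLocalMin φ 0 := Filter.Eventually.of_forall (fun t => by
      rw [hφ0]; exact hmin _)
    exact hloc.hasDerivAt_eq_zero (hφd 0)
  have hg'0 : g' 0 = 0 := by simp [hg'def, hφ'0]
  set F : ℝ → ℝ := fun t => g t - K / 2 * t ^ 2 with hFdef
  set F' : ℝ → ℝ := fun t => g' t - K * t with hF'def
  have hFd : ∀ t, HasDerivAt F (F' t) t := by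
    intro t
    have h2 : HasDerivAt (fun s : ℝ => K / 2 * s ^ 2) (K * t) t := by
      have h := (hasDerivAt_pow 2 t).const_mul (K / 2)
      convert h using 1
      · rfl
      · rfl
      push_cast
      ring
    exact (hgd t).sub h2
  have hF'd : ∀ t, HasDerivAt F' (g'' t - K) t := by
    intro t
    have h2 : HasDerivAt (fun s : ℝ => K * s) K t := by
      simpa using (hasDerivAt_id t).const_mul K
    exact (hg'd t).sub h2
  have hF'mono : Monotone F' := by
    apply monotone_of_deriv_nonneg (fun t => (hF'd t).differentiableAt)
    intro t
    rw [(hF'd t).deriv]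
    exact sub_nonneg.mpr (hK t)
  have hF'0 : F' 0 = 0 := by simp [hF'def, hg'0]
  have hFmono : MonotoneOn F (Set.Icc 0 1) := by
    apply monotoneOn_of_deriv_nonneg (convex_Icc 0 1)
      ((Differentiable.continuous (fun t => (hFd t).differentiableAt)).continuousOn)
      ((fun t _ => ((hFd t).differentiableAt.differentiableWithinAt)))
    intro t ht
    rw [interior_Icc] at ht
    rw [(hFd t).deriv]
    have : F' 0 ≤ F' t := hF'mono ht.1.le
    rw [hF'0] at this
    exact this
  have hfin : F 0 ≤ F 1 :=
    hFmono (Set.left_mem_Icc.mpr zero_le_one) (Set.right_mem_Icc.mpr zero_le_one) zero_le_one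
  have hℓ1 : ℓ 1 = θ := by simp [hℓdef, hu]
  have hg1 : g 1 = V θ ^ (1 + r) := by rw [hgdef]; simp only [hφdef, hℓ1]
  have hg0 : g 0 = V θstar ^ (1 + r) := by rw [hgdef]; simp only [hφ0]
  have hF0 : F 0 = g 0 := by simp [hFdef]
  have hF1 : F 1 = g 1 - K / 2 := by simp [hFdef]
  rw [hF0, hF1, hg0, hg1] at hfin
  have : K / 2 ≤ V θ ^ (1 + r) - V θstar ^ (1 + r) := by linarith
  calc (1 + r) * c / 2 * ‖u‖ ^ 2 = K / 2 := by rw [hKdef]; ring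
    _ ≤ _ := this
end

section
/- Suppose for each i = 1,…,n the function θ ↦ -log p_θ(X_i) is C², convex, with positive minimum, and satisfies λ_min(∇²(-log p_θ(X_i))) ≥ c·(-log p_θ(X_i))^{-r}, and -log π₀ is convex with positive minimum. Then U_{ν_n}(θ) = -log π₀(θ) - Σᵢ log p_θ(X_i) satisfies λ_min(∇²U_{ν_n}(θ)) ≥ c·n^{1+r}·U_{ν_n}(θ)^{-r} for all θ. -/
open Real MeasureTheory

lemma convexOn_rpow_neg' (r : ℝ) (hr : 0 ≤ r) :
    ConvexOn ℝ (Set.Ioi (0:ℝ)) (fun x : ℝ => x ^ (-r)) := by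
  have hderiv : ∀ x ∈ Set.Ioi (0:ℝ),
      deriv (fun y : ℝ => y ^ (-r)) x = -r * x ^ (-r - 1) := fun x hx =>
    (Real.hasDerivAt_rpow_const (Or.inl (ne_of_gt hx))).deriv
  apply convexOn_of_deriv2_nonneg (convex_Ioi 0)
  · intro x hx
    exact (Real.continuousAt_rpow_const x (-r) (Or.inl (ne_of_gt hx))).continuousWithinAt
  · rw [interior_Ioi]
    intro x hx
    exact (Real.hasDerivAt_rpow_const (Or.inl (ne_of_gt hx))).differentiableAt.differentiableWithinAt
  · rw [interior_Ioi]
    intro x hx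
    have hev : deriv (fun y : ℝ => y ^ (-r)) =ᶠ[nhds x] fun y => -r * y ^ (-r - 1) :=
      (isOpen_Ioi.eventually_mem hx).mono fun y hy => hderiv y hy
    have : DifferentiableAt ℝ (fun y : ℝ => -r * y ^ (-r - 1)) x :=
      ((Real.hasDerivAt_rpow_const (p := -r - 1) (Or.inl (ne_of_gt hx))).differentiableAt).const_mul _
    exact (hev.differentiableAt_iff.mpr this).differentiableWithinAt
  · rw [interior_Ioi]
    intro x hx
    have hev : deriv (fun y : ℝ => y ^ (-r)) =ᶠ[nhds x] fun y => -r * y ^ (-r - 1) :=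
      (isOpen_Ioi.eventually_mem hx).mono fun y hy => hderiv y hy
    have h2 : deriv^[2] (fun y : ℝ => y ^ (-r)) x
        = -r * ((-r - 1) * x ^ (-r - 1 - 1)) := by
      show deriv (deriv _) x = _
      rw [hev.deriv_eq]
      exact (((Real.hasDerivAt_rpow_const (p := -r - 1)
        (Or.inl (ne_of_gt hx)))).const_mul (-r)).deriv
    rw [h2]
    have := Real.rpow_nonneg (le_of_lt hx) (-r - 1 - 1)
    nlinarith [mul_nonneg hr this, mul_nonneg (mul_nonneg hr hr) this]

lemma deriv_nonneg_of_monotone' {g : ℝ → ℝ} (hm : Monotone g) {g' x : ℝ}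
    (h : HasDerivAt g g' x) : 0 ≤ g' := by
  have ht : Filter.Tendsto (slope g x) (nhdsWithin x (Set.Ioi x)) (nhds g') :=
    (hasDerivAt_iff_tendsto_slope.mp h).mono_left
      (nhdsWithin_mono x fun y hy => ne_of_gt hy)
  refine ge_of_tendsto ht ?_
  filter_upwards [self_mem_nhdsWithin] with y hy
  have h1 : (0:ℝ) ≤ g y - g x := sub_nonneg.mpr (hm (le_of_lt hy))
  have h2 : (0:ℝ) < y - x := sub_pos.mpr hy
  simp only [slope_def_field]
  rw [div_eq_inv_mul]
  positivity

lemma hessian_nonneg' {d : ℕ} {P : EuclideanSpace ℝ (Fin d) → ℝ}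
    (hC : ContDiff ℝ 2 P) (hconv : ConvexOn ℝ Set.univ P)
    (θ v : EuclideanSpace ℝ (Fin d)) :
    0 ≤ fderiv ℝ (fderiv ℝ P) θ v v := by
  set L : ℝ → EuclideanSpace ℝ (Fin d) := fun t => θ + t • v with hLdef
  have hPdiff : Differentiable ℝ P := hC.differentiable (by norm_num)
  have hL : ∀ t : ℝ, HasDerivAt L v t := by
    intro t
    have h1 : HasDerivAt (fun s : ℝ => s • v) ((1:ℝ) • v) t :=
      (hasDerivAt_id t).smul_const v
    simpa [hLdef] using h1.const_add θ
  have hgd : ∀ t : ℝ, HasDerivAt (P ∘ L) (fderiv ℝ P (L t) v) t := fun t =>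
    (hPdiff (L t)).hasFDerivAt.comp_hasDerivAt t (hL t)
  have hgconv : ConvexOn ℝ Set.univ (P ∘ L) := by
    have haff : ConvexOn ℝ ((AffineMap.lineMap θ (θ + v) : ℝ →ᵃ[ℝ] _) ⁻¹' Set.univ)
        (P ∘ (AffineMap.lineMap θ (θ + v))) := hconv.comp_affineMap _
    have : L = fun t => (AffineMap.lineMap θ (θ + v) : ℝ →ᵃ[ℝ] _) t := by
      funext t
      simp [hLdef, AffineMap.lineMap_apply]
      module
    rw [this]
    simpa using haff
  have hmono : Monotone (deriv (P ∘ L)) := by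
    have := hgconv.monotoneOn_deriv (fun x _ => (hgd x).differentiableAt)
    exact monotoneOn_univ.mp this
  have hderivg : deriv (P ∘ L) = fun t => fderiv ℝ P (L t) v := funext fun t => (hgd t).deriv
  have hfd2 : DifferentiableAt ℝ (fderiv ℝ P) θ :=
    ((hC.fderiv_right (m := 1) (by norm_num)).differentiable (by norm_num)) θ
  have hL0 : L 0 = θ := by simp [hLdef]
  have h1 : HasDerivAt (fun t => fderiv ℝ P (L t)) (fderiv ℝ (fderiv ℝ P) θ v) 0 := by
    have hfd2' : HasFDerivAt (fderiv ℝ P) (fderiv ℝ (fderiv ℝ P) θ) (L 0) := by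
      rw [hL0]; exact hfd2.hasFDerivAt
    have := hfd2'.comp_hasDerivAt 0 (hL 0)
    exact this
  have h2 : HasDerivAt (fun t => fderiv ℝ P (L t) v) (fderiv ℝ (fderiv ℝ P) θ v v) 0 :=
    (ContinuousLinearMap.apply ℝ ℝ v).hasFDerivAt.comp_hasDerivAt 0 h1
  rw [← hderivg] at h2
  exact deriv_nonneg_of_monotone' hmono h2

theorem stmt6 {d n : ℕ} (hn : 0 < n) (r c : ℝ)
    (hr0 : 0 ≤ r) (hr1 : r < 1) (hc : 0 < c)
    (V : Fin n → EuclideanSpace ℝ (Fin d) → ℝ)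
    (P : EuclideanSpace ℝ (Fin d) → ℝ)
    (hVC2 : ∀ i, ContDiff ℝ 2 (V i)) (hVconv : ∀ i, ConvexOn ℝ Set.univ (V i))
    (hVpos : ∀ i θ, 0 < V i θ)
    (hVKL : ∀ i θ v, c * (V i θ) ^ (-r) * ‖v‖ ^ 2
      ≤ (fderiv ℝ (fderiv ℝ (V i)) θ v) v)
    (hPC2 : ContDiff ℝ 2 P) (hPconv : ConvexOn ℝ Set.univ P)
    (hPpos : ∀ θ, 0 < P θ)
    (U : EuclideanSpace ℝ (Fin d) → ℝ)
    (hU : ∀ θ, U θ = P θ + ∑ i, V i θ) :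
    ∀ θ v, c * (n : ℝ) ^ ((1 : ℝ) + r) * (U θ) ^ (-r) * ‖v‖ ^ 2
      ≤ (fderiv ℝ (fderiv ℝ U) θ v) v := by
  intro θ v
  have hnpos : (0:ℝ) < (n:ℝ) := Nat.cast_pos.mpr hn
  have hPdiff : Differentiable ℝ P := hPC2.differentiable (by norm_num)
  have hVdiff : ∀ i, Differentiable ℝ (V i) := fun i => (hVC2 i).differentiable (by norm_num)
  have hUfun : U = fun x => P x + ∑ i, V i x := funext hU
  -- first derivative decomposition
  have h1 : fderiv ℝ U = fun x => fderiv ℝ P x + ∑ i, fderiv ℝ (V i) x := by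
    funext x
    rw [hUfun]
    rw [fderiv_fun_add (hPdiff x)
      (DifferentiableAt.fun_sum fun i _ => (hVdiff i x)),
      fderiv_fun_sum fun i _ => (hVdiff i x)]
  -- second derivative decomposition
  have hPfd : DifferentiableAt ℝ (fderiv ℝ P) θ :=
    ((hPC2.fderiv_right (m := 1) (by norm_num)).differentiable (by norm_num)) θ
  have hVfd : ∀ i, DifferentiableAt ℝ (fderiv ℝ (V i)) θ := fun i =>
    (((hVC2 i).fderiv_right (m := 1) (by norm_num)).differentiable (by norm_num)) θ
  have h2 : fderiv ℝ (fderiv ℝ U) θ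
      = fderiv ℝ (fderiv ℝ P) θ + ∑ i, fderiv ℝ (fderiv ℝ (V i)) θ := by
    rw [h1]
    rw [fderiv_fun_add hPfd (DifferentiableAt.fun_sum fun i _ => hVfd i),
      fderiv_fun_sum fun i _ => hVfd i]
  have hEval : fderiv ℝ (fderiv ℝ U) θ v v
      = fderiv ℝ (fderiv ℝ P) θ v v + ∑ i, fderiv ℝ (fderiv ℝ (V i)) θ v v := by
    rw [h2]
    simp [ContinuousLinearMap.sum_apply]
  -- Jensen step
  set S : ℝ := ∑ i, V i θ with hSdef
  have hSpos : 0 < S := Finset.sum_pos (fun i _ => hVpos i θ) ⟨⟨0, hn⟩, Finset.mem_univ _⟩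
  have hUeq : U θ = P θ + S := hU θ
  have hUpos : 0 < U θ := by rw [hUeq]; exact add_pos (hPpos θ) hSpos
  have hjen : ((n:ℝ)⁻¹ * S) ^ (-r) ≤ (n:ℝ)⁻¹ * ∑ i, (V i θ) ^ (-r) := by
    have := (convexOn_rpow_neg' r hr0).map_sum_le (t := Finset.univ)
      (w := fun _ : Fin n => (n:ℝ)⁻¹) (p := fun i => V i θ)
      (fun i _ => by positivity)
      (by simp [Finset.card_univ]; field_simp)
      (fun i _ => hVpos i θ)
    simpa [smul_eq_mul, ← Finset.mul_sum, hSdef] using this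
  have hkey : (n:ℝ) ^ ((1:ℝ) + r) * (U θ) ^ (-r) ≤ ∑ i, (V i θ) ^ (-r) := by
    have hstep1 : (U θ) ^ (-r) ≤ S ^ (-r) :=
      Real.rpow_le_rpow_of_nonpos hSpos (by rw [hUeq]; linarith [ (hPpos θ) ]) (neg_nonpos.mpr hr0)
    have hsplit : ((n:ℝ)⁻¹ * S) ^ (-r) = (n:ℝ) ^ r * S ^ (-r) := by
      rw [Real.mul_rpow (by positivity) hSpos.le, ← Real.rpow_neg_one,
        ← Real.rpow_mul hnpos.le]
      norm_num
    have hpow : (n:ℝ) ^ ((1:ℝ) + r) = (n:ℝ) * (n:ℝ) ^ r := by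
      rw [Real.rpow_add hnpos, Real.rpow_one]
    calc (n:ℝ) ^ ((1:ℝ) + r) * (U θ) ^ (-r)
        ≤ (n:ℝ) ^ ((1:ℝ) + r) * S ^ (-r) := by
          apply mul_le_mul_of_nonneg_left hstep1 (by positivity)
      _ = (n:ℝ) * ((n:ℝ) ^ r * S ^ (-r)) := by rw [hpow]; ring
      _ = (n:ℝ) * ((n:ℝ)⁻¹ * S) ^ (-r) := by rw [hsplit]
      _ ≤ (n:ℝ) * ((n:ℝ)⁻¹ * ∑ i, (V i θ) ^ (-r)) :=
          mul_le_mul_of_nonneg_left hjen hnpos.le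
      _ = ∑ i, (V i θ) ^ (-r) := by field_simp
  -- combine
  rw [hEval]
  have hP0 : 0 ≤ fderiv ℝ (fderiv ℝ P) θ v v := hessian_nonneg' hPC2 hPconv θ v
  have hsum : ∑ i, c * (V i θ) ^ (-r) * ‖v‖ ^ 2 ≤ ∑ i, fderiv ℝ (fderiv ℝ (V i)) θ v v :=
    Finset.sum_le_sum fun i _ => hVKL i θ v
  have hlhs : c * (n:ℝ) ^ ((1:ℝ) + r) * (U θ) ^ (-r) * ‖v‖ ^ 2
      ≤ ∑ i, c * (V i θ) ^ (-r) * ‖v‖ ^ 2 := by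
    have : ∑ i, c * (V i θ) ^ (-r) * ‖v‖ ^ 2
        = c * ‖v‖ ^ 2 * ∑ i, (V i θ) ^ (-r) := by
      rw [Finset.mul_sum]; congr 1; funext i; ring
    rw [this]
    have := mul_le_mul_of_nonneg_left hkey (show (0:ℝ) ≤ c * ‖v‖ ^ 2 by positivity)
    calc c * (n:ℝ) ^ ((1:ℝ) + r) * (U θ) ^ (-r) * ‖v‖ ^ 2
        = c * ‖v‖ ^ 2 * ((n:ℝ) ^ ((1:ℝ) + r) * (U θ) ^ (-r)) := by ring
      _ ≤ c * ‖v‖ ^ 2 * ∑ i, (V i θ) ^ (-r) := this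
  linarith [hlhs.trans hsum]
end
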